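/- For every integer m ≥ 0, every integer k, every integer n ≥ 1, and every holomorphic function f : ℍ → ℂ, one has D^m(T_n^{(k)} f) = n^{-m} · T_n^{(k+2m)}(D^m f). -/

import Mathlib

open Complex BigOperators

noncomputable section

/-- The upper half-plane ℍ, viewed as a subset of ℂ. -/
def UpperHalf : Set ℂ := {z : ℂ | 0 < z.im}

/-- The differential operator `D = (1/(2πi)) d/dz`. -/
def Dop (f : ℂ → ℂ) : ℂ → ℂ := fun z => (1 / (2 * (Real.pi : ℂ) * I)) * deriv f z

/-- The `n`-th Hecke operator in weight `k`:
`(T_n^{(k)} f)(z) = n^{k-1} Σ_{d|n} d^{-k} Σ_{b=0}^{d-1} f((nz + bd)/d²)`. -/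
def hecke (k : ℤ) (n : ℕ) (f : ℂ → ℂ) : ℂ → ℂ := fun z =>
  (n : ℂ) ^ (k - 1) * ∑ d ∈ n.divisors, (d : ℂ) ^ (-k) *
    ∑ b ∈ Finset.range d, f (((n : ℂ) * z + (b : ℂ) * (d : ℂ)) / ((d : ℂ) ^ 2))

/-- `σ_k(m) = Σ_{d|m} d^k`. -/
def sigmaFn (k m : ℕ) : ℕ := ∑ d ∈ m.divisors, d ^ k

/-- The Eisenstein series `E_k(z) = 1 − (2k/B_k) Σ_{m≥1} σ_{k−1}(m) q^m`, `q = e^{2πiz}`. -/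
def Eis (k : ℕ) : ℂ → ℂ := fun z =>
  1 - (2 * (k : ℂ) / ((bernoulli k : ℚ) : ℂ)) *
    ∑' m : ℕ, ((sigmaFn (k - 1) (m + 1) : ℕ) : ℂ) *
      Complex.exp (2 * (Real.pi : ℂ) * I * z) ^ (m + 1)

/-- The nearly holomorphic Eisenstein series `E_2*(z) = E_2(z) − 3/(π Im z)`. -/
def E2star : ℂ → ℂ := fun z => Eis 2 z - 3 / ((Real.pi : ℂ) * (z.im : ℂ))

/-- `Δ_12 = (E_4³ − E_6²)/1728`, the discriminant cusp form of weight 12. -/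
def Delta12 : ℂ → ℂ := fun z => (Eis 4 z ^ 3 - Eis 6 z ^ 2) / 1728

/-- `Δ_16`, the unique normalized cusp form of weight 16 (equal to `E_4 Δ_12`). -/
def Delta16 : ℂ → ℂ := fun z => Eis 4 z * Delta12 z

/-- `Δ_18`, the unique normalized cusp form of weight 18 (equal to `E_6 Δ_12`). -/
def Delta18 : ℂ → ℂ := fun z => Eis 6 z * Delta12 z

/-- `Δ_20`, the unique normalized cusp form of weight 20 (equal to `E_8 Δ_12`). -/
def Delta20 : ℂ → ℂ := fun z => Eis 8 z * Delta12 z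

/-- `Δ_22`, the unique normalized cusp form of weight 22 (equal to `E_10 Δ_12`). -/
def Delta22 : ℂ → ℂ := fun z => Eis 10 z * Delta12 z

/-- `Δ_26`, the unique normalized cusp form of weight 26 (equal to `E_14 Δ_12`). -/
def Delta26 : ℂ → ℂ := fun z => Eis 14 z * Delta12 z

/-- A quasimodular form of weight `k` on `SL₂(ℤ)`: a ℂ-linear combination of monomials
`E_2^a E_4^b E_6^c` with `2a + 4b + 6c = k` (as a function on the upper half-plane). -/
def IsQuasimodular (k : ℕ) (f : ℂ → ℂ) : Prop :=
  ∃ (S : Finset (ℕ × ℕ × ℕ)) (c : ℕ × ℕ × ℕ → ℂ),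
    (∀ t ∈ S, 2 * t.1 + 4 * t.2.1 + 6 * t.2.2 = k) ∧
    ∀ z ∈ UpperHalf,
      f z = ∑ t ∈ S, c t * Eis 2 z ^ t.1 * Eis 4 z ^ t.2.1 * Eis 6 z ^ t.2.2

/-- A quasimodular form of weight `k` and depth `≤ p`: a ℂ-linear combination of monomials
`E_2^a E_4^b E_6^c` with `2a + 4b + 6c = k` and `a ≤ p`. -/
def IsQuasimodularDepth (k p : ℕ) (f : ℂ → ℂ) : Prop :=
  ∃ (S : Finset (ℕ × ℕ × ℕ)) (c : ℕ × ℕ × ℕ → ℂ),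
    (∀ t ∈ S, 2 * t.1 + 4 * t.2.1 + 6 * t.2.2 = k ∧ t.1 ≤ p) ∧
    ∀ z ∈ UpperHalf,
      f z = ∑ t ∈ S, c t * Eis 2 z ^ t.1 * Eis 4 z ^ t.2.1 * Eis 6 z ^ t.2.2

/-- `f` satisfies the Hecke eigenform equations of weight `k` on ℍ: for every `n ≥ 1`
there is `λ_n ∈ ℂ` with `T_n^{(k)} f = λ_n f` on the upper half-plane. -/
def IsEigenOn (k : ℤ) (f : ℂ → ℂ) : Prop :=
  ∀ n : ℕ, 1 ≤ n → ∃ c : ℂ, ∀ z ∈ UpperHalf, hecke k n f z = c * f z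

/-- An eigenform of weight `k`: a function that is nonzero on ℍ and satisfies the Hecke
eigenform equations of weight `k`. -/
def IsEigenform (k : ℤ) (f : ℂ → ℂ) : Prop :=
  (∃ z ∈ UpperHalf, f z ≠ 0) ∧ IsEigenOn k f

/-- A holomorphic modular form of weight `k` on `SL₂(ℤ)`: holomorphic on ℍ, satisfying the
weight-`k` modular transformation law, and bounded as `Im z → ∞`. -/
def IsModularForm (k : ℤ) (f : ℂ → ℂ) : Prop :=
  DifferentiableOn ℂ f UpperHalf ∧
  (∀ a b c d : ℤ, a * d - b * c = 1 → ∀ z ∈ UpperHalf,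
      f (((a : ℂ) * z + (b : ℂ)) / ((c : ℂ) * z + (d : ℂ))) =
        ((c : ℂ) * z + (d : ℂ)) ^ k * f z) ∧
  ∃ C : ℝ, ∀ z ∈ UpperHalf, 1 ≤ z.im → ‖f z‖ ≤ C

/-- `f` is a nonzero scalar multiple of `F` (as functions on the upper half-plane). -/
def ScalarOf (f F : ℂ → ℂ) : Prop := ∃ c : ℂ, c ≠ 0 ∧ ∀ z ∈ UpperHalf, f z = c * F z

/-- The unordered pair `{f, g}` equals `{F, G}` up to nonzero scalar multiples. -/
def UPair (f g F G : ℂ → ℂ) : Prop :=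
  (ScalarOf f F ∧ ScalarOf g G) ∨ (ScalarOf f G ∧ ScalarOf g F)

lemma upperHalf_isOpen : IsOpen UpperHalf :=
  isOpen_lt continuous_const Complex.continuous_im

lemma hecke_point_mem {n d : ℕ} (hn : 1 ≤ n) (hd : d ∈ n.divisors) {z : ℂ}
    (hz : z ∈ UpperHalf) (b : ℕ) :
    ((n : ℂ) * z + (b : ℂ) * (d : ℂ)) / ((d : ℂ) ^ 2) ∈ UpperHalf := by
  have hd0 : 0 < d := Nat.pos_of_mem_divisors hd
  have hn0 : (0 : ℝ) < n := by exact_mod_cast hn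
  have hzim : 0 < z.im := hz
  simp only [UpperHalf, Set.mem_setOf_eq] at *
  have h1 : ((n : ℂ) * z + (b : ℂ) * (d : ℂ)).im = (n : ℝ) * z.im := by
    simp [Complex.add_im, Complex.mul_im]
  have h2 : ((d : ℂ) ^ 2) = ((d ^ 2 : ℝ) : ℂ) := by push_cast; ring
  rw [h2, Complex.div_ofReal_im, h1]
  have : (0:ℝ) < (d:ℝ)^2 := by positivity
  positivity

lemma analyticOnNhd_iter_Dop {f : ℂ → ℂ} (hf : DifferentiableOn ℂ f UpperHalf) (m : ℕ) :
    AnalyticOnNhd ℂ (Dop^[m] f) UpperHalf := by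
  induction m with
  | zero => exact hf.analyticOnNhd upperHalf_isOpen
  | succ m ih =>
    rw [Function.iterate_succ']
    show AnalyticOnNhd ℂ (Dop (Dop^[m] f)) UpperHalf
    exact analyticOnNhd_const.mul ih.deriv

lemma Dop_hecke_step (k : ℤ) (n : ℕ) (hn : 1 ≤ n) (f : ℂ → ℂ)
    (hf : DifferentiableOn ℂ f UpperHalf) {z : ℂ} (hz : z ∈ UpperHalf) :
    Dop (hecke k n f) z = (n : ℂ)⁻¹ * hecke (k + 2) n (Dop f) z := by
  have hn0 : (n : ℂ) ≠ 0 := Nat.cast_ne_zero.mpr (by omega)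
  have H : HasDerivAt (hecke k n f)
      ((n : ℂ) ^ (k - 1) * ∑ d ∈ n.divisors, (d : ℂ) ^ (-k) *
        ∑ b ∈ Finset.range d,
          deriv f (((n : ℂ) * z + (b : ℂ) * (d : ℂ)) / ((d : ℂ) ^ 2)) * ((n : ℂ) / (d : ℂ) ^ 2))
      z := by
    unfold hecke
    apply HasDerivAt.const_mul
    apply HasDerivAt.fun_sum
    intro d hd
    apply HasDerivAt.const_mul
    apply HasDerivAt.fun_sum
    intro b _
    set w : ℂ := ((n : ℂ) * z + (b : ℂ) * (d : ℂ)) / ((d : ℂ) ^ 2) with hw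
    have hwmem : w ∈ UpperHalf := hecke_point_mem hn hd hz b
    have hfw : HasDerivAt f (deriv f w) w :=
      (hf.differentiableAt (upperHalf_isOpen.mem_nhds hwmem)).hasDerivAt
    have hg : HasDerivAt (fun y : ℂ => ((n : ℂ) * y + (b : ℂ) * (d : ℂ)) / ((d : ℂ) ^ 2))
        ((n : ℂ) / (d : ℂ) ^ 2) z := by
      have := (((hasDerivAt_id z).const_mul (n : ℂ)).add_const
        ((b : ℂ) * (d : ℂ))).div_const ((d : ℂ) ^ 2)
      simpa using this
    exact hfw.comp z hg
  have hD : deriv (hecke k n f) z = _ := H.deriv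
  show (1 / (2 * (Real.pi : ℂ) * I)) * deriv (hecke k n f) z = _
  rw [hD]
  unfold hecke Dop
  simp only [Finset.mul_sum]
  refine Finset.sum_congr rfl fun d hd => ?_
  refine Finset.sum_congr rfl fun b _ => ?_
  have hd0 : (d : ℂ) ≠ 0 :=
    Nat.cast_ne_zero.mpr (Nat.pos_of_mem_divisors hd).ne'
  have e1 : (n : ℂ) ^ (k + 2 - 1) = (n : ℂ) ^ (k - 1) * ((n : ℂ) * (n : ℂ)) := by
    rw [show k + 2 - 1 = (k - 1) + 2 from by ring, zpow_add₀ hn0, zpow_two]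
  have e2 : (d : ℂ) ^ (-(k + 2)) = (d : ℂ) ^ (-k) * ((d : ℂ) * (d : ℂ))⁻¹ := by
    rw [show -(k + 2) = -k + (-2) from by ring, zpow_add₀ hd0]
    congr 1
    rw [zpow_neg, zpow_two]
  rw [e1, e2]
  field_simp

/-- For every integer `m ≥ 0`, every integer `k`, every `n ≥ 1` and every holomorphic
`f : ℍ → ℂ`, one has `D^m (T_n^{(k)} f) = n^{-m} · T_n^{(k+2m)} (D^m f)` on ℍ. -/
theorem rankin_cohen_stmt0 (m : ℕ) (k : ℤ) (n : ℕ) (hn : 1 ≤ n) (f : ℂ → ℂ)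
    (hf : DifferentiableOn ℂ f UpperHalf) :
    ∀ z ∈ UpperHalf,
      Dop^[m] (hecke k n f) z =
        (n : ℂ) ^ (-(m : ℤ)) * hecke (k + 2 * m) n (Dop^[m] f) z := by
  have hn0 : (n : ℂ) ≠ 0 := Nat.cast_ne_zero.mpr (by omega)
  induction m with
  | zero => intro z hz; simp
  | succ m ih =>
    intro z hz
    have heq : Dop^[m] (hecke k n f) =ᶠ[nhds z]
        fun w => (n : ℂ) ^ (-(m : ℤ)) * hecke (k + 2 * m) n (Dop^[m] f) w := by
      filter_upwards [upperHalf_isOpen.mem_nhds hz] with w hw using ih w hw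
    have hstep :
        Dop (hecke (k + 2 * m) n (Dop^[m] f)) z =
          (n : ℂ)⁻¹ * hecke (k + 2 * m + 2) n (Dop (Dop^[m] f)) z :=
      Dop_hecke_step (k + 2 * m) n hn (Dop^[m] f)
        ((analyticOnNhd_iter_Dop hf m).differentiableOn) hz
    calc Dop^[m + 1] (hecke k n f) z
        = Dop (Dop^[m] (hecke k n f)) z := by rw [Function.iterate_succ_apply']
      _ = Dop (fun w => (n : ℂ) ^ (-(m : ℤ)) * hecke (k + 2 * m) n (Dop^[m] f) w) z := by
          have hd := heq.deriv_eq
          simp only [Dop]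
          rw [hd]
      _ = (n : ℂ) ^ (-(m : ℤ)) * Dop (hecke (k + 2 * m) n (Dop^[m] f)) z := by
          simp only [Dop]
          rw [deriv_const_mul_field]
          ring
      _ = (n : ℂ) ^ (-(m : ℤ)) * ((n : ℂ)⁻¹ *
            hecke (k + 2 * m + 2) n (Dop (Dop^[m] f)) z) := by rw [hstep]
      _ = (n : ℂ) ^ (-((m + 1 : ℕ) : ℤ)) *
            hecke (k + 2 * (m + 1 : ℕ)) n (Dop^[m + 1] f) z := by
          have h1 : Dop^[m + 1] f = Dop (Dop^[m] f) := by
            funext w; rw [Function.iterate_succ_apply']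
          have h2 : (k + 2 * ((m + 1 : ℕ) : ℤ)) = k + 2 * (m : ℤ) + 2 := by push_cast; ring
          have h3 : (n : ℂ) ^ (-((m + 1 : ℕ) : ℤ)) = (n : ℂ) ^ (-(m : ℤ)) * (n : ℂ)⁻¹ := by
            rw [show -((m + 1 : ℕ) : ℤ) = -(m : ℤ) + (-1) from by push_cast; ring,
              zpow_add₀ hn0]
            norm_num
          rw [h1, h2, h3]
          ring
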